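/- For every complex number x with x² − x + 1 ≠ 0, (x − 2)·(x + 1) ≠ 0, setting z = −48/(x² − x + 1) one has z + 16 ≠ 0 and the identity 1728·z/(z + 16)³ = −81·(x² − x + 1)²/(4·(x − 2)³·(x + 1)³). -/

import Mathlib

/-- Hauptmodul identity: with `z = −48/(x² − x + 1)`, one has `z + 16 ≠ 0` and
`1728z/(z+16)³ = −81(x² − x + 1)²/(4(x−2)³(x+1)³)`. -/
theorem hauptmodul_level2 (x : ℂ) (hq : x ^ 2 - x + 1 ≠ 0)
    (hc : (x - 2) * (x + 1) ≠ 0) :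
    let z : ℂ := -48 / (x ^ 2 - x + 1)
    z + 16 ≠ 0 ∧
      1728 * z / (z + 16) ^ 3 =
        -(81 * (x ^ 2 - x + 1) ^ 2) / (4 * (x - 2) ^ 3 * (x + 1) ^ 3) := by
  intro z
  have h2 : x - 2 ≠ 0 := fun h => hc (by rw [h]; ring)
  have h1 : x + 1 ≠ 0 := fun h => hc (by rw [h]; ring)
  have hz : z + 16 = 16 * (x - 2) * (x + 1) / (x ^ 2 - x + 1) := by
    show -48 / (x ^ 2 - x + 1) + 16 = _
    rw [div_add' _ _ _ hq]
    ring
  constructor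
  · rw [hz]
    exact div_ne_zero (by simp [h2, h1]) hq
  · show 1728 * (-48 / (x ^ 2 - x + 1)) / (z + 16) ^ 3 = _
    rw [hz]
    field_simp
    ring
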